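/- For a permutation g in S_n acting on C^n by the standard permutation representation, twice the age of g equals the index of g, i.e., 2·age(g) = n − (number of g-orbits in {1,…,n}). -/

import Mathlib

open Finset

lemma aux_geom {l : ℕ} {z : ℂ} (hz : z ^ l = 1) :
    ∑ k ∈ Finset.range l, z ^ k = if z = 1 then (l : ℂ) else 0 := by
  split_ifs with h1
  · simp [h1]
  · rw [geom_sum_eq h1, hz, sub_self, zero_div]

lemma aux_permMatrix_pow {n : ℕ} (g : Equiv.Perm (Fin n)) (k : ℕ) :
    ((g ^ k).permMatrix ℂ) = (g.permMatrix ℂ) ^ k := by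
  induction k with
  | zero =>
      rw [pow_zero, pow_zero]
      show (Equiv.toPEquiv (Equiv.refl (Fin n))).toMatrix = 1
      rw [Equiv.toPEquiv_refl, PEquiv.toMatrix_refl]
  | succ k ih =>
      rw [pow_succ, pow_succ']
      have : (g ^ k * g : Equiv.Perm (Fin n)) = (g.trans (g ^ k) : Equiv.Perm (Fin n)) := rfl
      rw [this]
      show (g.trans (g ^ k)).toPEquiv.toMatrix = _
      rw [Equiv.toPEquiv_trans, PEquiv.toMatrix_trans]
      show Equiv.Perm.permMatrix ℂ g * Equiv.Perm.permMatrix ℂ (g ^ k) = _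
      rw [ih]

lemma aux_trace {n : ℕ} (σ : Equiv.Perm (Fin n)) :
    Matrix.trace (σ.permMatrix ℂ) = ((Finset.univ.filter fun x => σ x = x).card : ℂ) := by
  rw [Matrix.trace, Finset.card_filter]
  push_cast
  refine Finset.sum_congr rfl fun i _ => ?_
  simp [Matrix.diag, PEquiv.toMatrix_apply, Equiv.toPEquiv_apply, eq_comm]

/-- The number of orbits of the cyclic group generated by `g` on `Fin n`. -/
noncomputable def numOrbits {n : ℕ} (g : Equiv.Perm (Fin n)) : ℕ :=
  Nat.card (MulAction.orbitRel.Quotient (Subgroup.zpowers g) (Fin n))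

lemma aux_burnside {n l : ℕ} (hl : 0 < l) (g : Equiv.Perm (Fin n)) (hord : orderOf g = l) :
    ∑ k ∈ Finset.range l, (Finset.univ.filter fun x => (g ^ k) x = x).card = numOrbits g * l := by
  classical
  have hfin : IsOfFinOrder g := orderOf_pos_iff.mp (hord ▸ hl)
  have burn := MulAction.sum_card_fixedBy_eq_card_orbits_mul_card_group (Subgroup.zpowers g) (Fin n)
  have hcard : Fintype.card (Subgroup.zpowers g) = l := by
    rw [Fintype.card_zpowers, hord]
  have hfix : ∀ (m : Subgroup.zpowers g),
      Fintype.card (MulAction.fixedBy (Fin n) m)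
        = (Finset.univ.filter fun x => (↑m : Equiv.Perm (Fin n)) x = x).card := by
    intro m
    rw [← Fintype.card_subtype]
    exact Fintype.card_congr (Equiv.subtypeEquivRight fun x => by
      simp [MulAction.mem_fixedBy, Subgroup.smul_def, Equiv.Perm.smul_def])
  let e : Fin l ≃ (Subgroup.zpowers g) := (finCongr hord.symm).trans (finEquivZPowers hfin)
  have hsum : ∑ m : Subgroup.zpowers g, Fintype.card (MulAction.fixedBy (Fin n) m)
      = ∑ k ∈ Finset.range l, (Finset.univ.filter fun x => (g ^ k) x = x).card := by
    rw [← Fin.sum_univ_eq_sum_range]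
    refine (Fintype.sum_equiv e _ _ fun k => ?_).symm
    rw [hfix]
    rfl
  rw [← hsum, burn, hcard, numOrbits, Nat.card_eq_fintype_card]

/-- For a permutation `g ∈ S_n` viewed in `GL_n(ℂ)` via the standard permutation
representation, if `g` is diagonalized as `h⁻¹ g h = diag(ζ^{a 1}, …, ζ^{a n})` with
`ζ = exp(2πi/l)`, `l = orderOf g` and `0 ≤ a i < l`, then twice the age
`(1/l) Σ a i` equals the index `n − #{orbits of g}`. -/
theorem two_age_eq_index {n l : ℕ} (hl : 0 < l) (g : Equiv.Perm (Fin n))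
    (hord : orderOf g = l) (a : Fin n → ℕ) (ha : ∀ i, a i < l)
    (h : (Matrix (Fin n) (Fin n) ℂ)ˣ)
    (hdiag : (↑h⁻¹ : Matrix (Fin n) (Fin n) ℂ) * (g.permMatrix ℂ) * (↑h : Matrix (Fin n) (Fin n) ℂ)
      = Matrix.diagonal (fun i => Complex.exp (2 * Real.pi * Complex.I / l) ^ (a i))) :
    2 * ((∑ i, (a i : ℚ)) / l) = (n : ℚ) - numOrbits g := by
  classical
  set ζ : ℂ := Complex.exp (2 * Real.pi * Complex.I / l) with hζdef
  have hprim : IsPrimitiveRoot ζ l := Complex.isPrimitiveRoot_exp l hl.ne'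
  have hζl : ζ ^ l = 1 := hprim.pow_eq_one
  set D : Matrix (Fin n) (Fin n) ℂ := Matrix.diagonal (fun i => ζ ^ a i) with hDdef
  have hM : g.permMatrix ℂ
      = (↑h : Matrix (Fin n) (Fin n) ℂ) * D * (↑h⁻¹ : Matrix (Fin n) (Fin n) ℂ) := by
    have e : (↑h : Matrix (Fin n) (Fin n) ℂ) * ((↑h⁻¹ : Matrix (Fin n) (Fin n) ℂ)
        * g.permMatrix ℂ * (↑h : Matrix (Fin n) (Fin n) ℂ)) * (↑h⁻¹ : Matrix (Fin n) (Fin n) ℂ)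
        = (↑h : Matrix (Fin n) (Fin n) ℂ) * D * (↑h⁻¹ : Matrix (Fin n) (Fin n) ℂ) := by
      rw [hdiag]
    rw [← e]
    simp only [← Matrix.mul_assoc]
    rw [Units.mul_inv_cancel_right, h.mul_inv, one_mul]
  set F : ℕ → ℕ := fun k => (Finset.univ.filter fun x => (g ^ k) x = x).card with hFdef
  set N : ℕ → ℕ := fun c => (Finset.univ.filter fun i => a i = c).card with hNdef
  -- trace identity
  have hT : ∀ k, (F k : ℂ) = ∑ i, (ζ ^ a i) ^ k := by
    intro k
    rw [← aux_trace (g ^ k), aux_permMatrix_pow, hM, Units.conj_pow,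
      Matrix.trace_mul_comm, ← Matrix.mul_assoc, Units.inv_mul, one_mul,
      hDdef, Matrix.diagonal_pow, Matrix.trace_diagonal]
    rfl
  -- Fourier inversion
  have claim1 : ∀ c, c < l → (l : ℂ) * N c = ∑ k ∈ range l, ζ ^ ((l - c) * k) * F k := by
    intro c hc
    have step1 : ∀ k, ζ ^ ((l - c) * k) * (F k : ℂ) = ∑ i, (ζ ^ (l - c + a i)) ^ k := by
      intro k
      rw [hT k, Finset.mul_sum]
      refine Finset.sum_congr rfl fun i _ => ?_
      rw [pow_mul, ← pow_mul, pow_mul, ← mul_pow, ← pow_add]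
    rw [Finset.sum_congr rfl (fun k _ => step1 k), Finset.sum_comm]
    have step2 : ∀ i : Fin n, ∑ k ∈ range l, (ζ ^ (l - c + a i)) ^ k
        = if a i = c then (l : ℂ) else 0 := by
      intro i
      rw [aux_geom (by rw [← pow_mul, mul_comm, pow_mul, hζl, one_pow])]
      have hiff : ζ ^ (l - c + a i) = 1 ↔ a i = c := by
        rw [hprim.pow_eq_one_iff_dvd]
        constructor
        · intro hd
          have h1 : l ≤ l - c + a i := Nat.le_of_dvd (by omega) hd
          have h2 : l - c + a i = l := Nat.eq_of_dvd_of_lt_two_mul (by omega) hd (by have := ha i; omega)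
          omega
        · intro hd; exact ⟨1, by omega⟩
      rw [if_congr hiff rfl rfl]
    rw [Finset.sum_congr rfl (fun i _ => step2 i), Finset.sum_ite, Finset.sum_const,
      Finset.sum_const_zero, add_zero, nsmul_eq_mul, mul_comm]
  -- fixed point symmetry
  have hg1 : g ^ l = 1 := by rw [← hord]; exact pow_orderOf_eq_one g
  have hFsym : ∀ k, 0 < k → k < l → F (l - k) = F k := by
    intro k hk1 hk2
    have hinv : g ^ (l - k) = (g ^ k)⁻¹ := by
      refine eq_inv_of_mul_eq_one_left ?_
      rw [← pow_add]
      have : l - k + k = l := by omega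
      rw [this, hg1]
    simp only [hFdef, hinv]
    congr 1
    ext x
    simp only [Finset.mem_filter, Finset.mem_univ, true_and]
    constructor
    · intro hx; conv_lhs => rw [← hx]
      simp
    · intro hx; conv_lhs => rw [← hx]
      simp
  -- power mod lemma
  have hmod : ∀ m m' : ℕ, m % l = m' % l → ζ ^ m = ζ ^ m' := by
    intro m m' e
    rw [← Nat.div_add_mod m l, ← Nat.div_add_mod m' l, pow_add, pow_add,
      pow_mul, pow_mul, hζl, one_pow, one_pow, e]
  -- symmetry of N
  have hsym : ∀ c, 0 < c → c < l → N c = N (l - c) := by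
    intro c hc1 hc2
    have e1 := claim1 c hc2
    have e2 := claim1 (l - c) (by omega)
    have hll : l - (l - c) = c := by omega
    rw [hll] at e2
    have hswap : ∑ k ∈ range l, ζ ^ ((l - c) * k) * (F k : ℂ)
        = ∑ k ∈ range l, ζ ^ (c * k) * (F k : ℂ) := by
      have hins : range l = insert 0 (Finset.Ico 1 l) := by
        rw [Finset.range_eq_Ico, ← Finset.insert_Ico_add_one_left_eq_Ico hl, zero_add]
      rw [hins, Finset.sum_insert (by simp), Finset.sum_insert (by simp)]
      congr 1
      refine Finset.sum_nbij' (fun k => l - k) (fun k => l - k) ?_ ?_ ?_ ?_ ?_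
      · intro k hk; simp only [Finset.mem_Ico] at hk ⊢; omega
      · intro k hk; simp only [Finset.mem_Ico] at hk ⊢; omega
      · intro k hk; simp only [Finset.mem_Ico] at hk; omega
      · intro k hk; simp only [Finset.mem_Ico] at hk; omega
      · intro k hk
        simp only [Finset.mem_Ico] at hk
        have hF' : F (l - k) = F k := hFsym k hk.1 hk.2
        rw [hF']
        have hexp : ζ ^ ((l - c) * k) = ζ ^ (c * (l - k)) := by
          apply hmod
          have m1 : (l - c) * k + c * k = l * k := by
            rw [← add_mul]; congr 1; omega
          have m2 : c * (l - k) + c * k = c * l := by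
            rw [← mul_add]; congr 1; omega
          have key : ((l - c) * k + c * k) % l = (c * (l - k) + c * k) % l := by
            rw [m1, m2]
            simp [Nat.mul_mod_left, Nat.mul_mod_right]
          exact Nat.ModEq.add_right_cancel' _ key
        rw [hexp]
    rw [hswap, ← e2] at e1
    have hlne : (l : ℂ) ≠ 0 := Nat.cast_ne_zero.mpr hl.ne'
    have := mul_left_cancel₀ hlne e1
    exact_mod_cast this
  -- N 0 = numOrbits
  have hN0 : N 0 = numOrbits g := by
    have e0 := claim1 0 hl
    have hz : ∀ k ∈ range l, ζ ^ ((l - 0) * k) * (F k : ℂ) = (F k : ℂ) := by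
      intro k _
      rw [Nat.sub_zero, pow_mul, hζl, one_pow, one_mul]
    rw [Finset.sum_congr rfl hz] at e0
    have hb : ∑ k ∈ range l, (F k : ℂ) = ((numOrbits g * l : ℕ) : ℂ) := by
      rw [← aux_burnside hl g hord]
      push_cast
      rfl
    rw [hb] at e0
    have h2 : l * N 0 = numOrbits g * l := by exact_mod_cast e0
    rw [mul_comm (numOrbits g) l] at h2
    exact Nat.eq_of_mul_eq_mul_left hl h2
  -- counting identities
  have hNsum : ∑ c ∈ range l, N c = n := by
    have := Finset.card_eq_sum_card_fiberwise
      (f := a) (s := Finset.univ) (t := range l) (fun i _ => Finset.mem_range.mpr (ha i))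
    simpa using this.symm
  have hfib : ∑ i, a i = ∑ c ∈ range l, c * N c := by
    rw [← Finset.sum_fiberwise_of_maps_to (g := a) (t := range l)
      (fun i _ => Finset.mem_range.mpr (ha i)) a]
    refine Finset.sum_congr rfl fun c _ => ?_
    have : ∑ i ∈ Finset.univ.filter fun i => a i = c, a i
        = ∑ i ∈ Finset.univ.filter fun i => a i = c, c := by
      refine Finset.sum_congr rfl fun i hi => ?_
      exact (Finset.mem_filter.mp hi).2
    rw [this, Finset.sum_const, smul_eq_mul, mul_comm]
  -- key natural-number identity
  have hins : range l = insert 0 (Finset.Ico 1 l) := by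
    rw [Finset.range_eq_Ico, ← Finset.insert_Ico_add_one_left_eq_Ico hl, zero_add]
  have hIco : ∑ c ∈ Finset.Ico 1 l, c * N c = ∑ c ∈ Finset.Ico 1 l, (l - c) * N c := by
    refine Finset.sum_nbij' (fun c => l - c) (fun c => l - c) ?_ ?_ ?_ ?_ ?_
    · intro c hc; simp only [Finset.mem_Ico] at hc ⊢; omega
    · intro c hc; simp only [Finset.mem_Ico] at hc ⊢; omega
    · intro c hc; simp only [Finset.mem_Ico] at hc; omega
    · intro c hc; simp only [Finset.mem_Ico] at hc; omega
    · intro c hc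
      simp only [Finset.mem_Ico] at hc
      have h1 : l - (l - c) = c := by omega
      rw [h1, ← hsym c hc.1 hc.2]
  have hNIco : ∑ c ∈ Finset.Ico 1 l, N c = n - N 0 := by
    have : ∑ c ∈ range l, N c = N 0 + ∑ c ∈ Finset.Ico 1 l, N c := by
      rw [hins, Finset.sum_insert (by simp)]
    omega
  have key : 2 * ∑ i, a i = l * (n - N 0) := by
    have h1 : ∑ i, a i = ∑ c ∈ Finset.Ico 1 l, c * N c := by
      rw [hfib, hins, Finset.sum_insert (by simp), zero_mul, zero_add]
    have h2 : 2 * ∑ i, a i = ∑ c ∈ Finset.Ico 1 l, (c * N c + (l - c) * N c) := by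
      rw [Finset.sum_add_distrib, ← hIco, ← h1, two_mul]
    rw [h2]
    have h3 : ∀ c ∈ Finset.Ico 1 l, c * N c + (l - c) * N c = l * N c := by
      intro c hc
      simp only [Finset.mem_Ico] at hc
      have : c + (l - c) = l := by omega
      rw [← add_mul, this]
    rw [Finset.sum_congr rfl h3, ← Finset.mul_sum, hNIco]
  -- conclude over ℚ
  have hN0le : N 0 ≤ n := by
    have := Finset.card_filter_le (Finset.univ : Finset (Fin n)) (fun i => a i = 0)
    simpa [hNdef] using this
  have hcast : ((2 * ∑ i, a i : ℕ) : ℚ) = ((l * (n - N 0) : ℕ) : ℚ) := Nat.cast_inj.mpr key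
  rw [← hN0]
  have hsumcast : (∑ i, (a i : ℚ)) = ((∑ i, a i : ℕ) : ℚ) := by push_cast; rfl
  rw [hsumcast]
  push_cast [Nat.cast_sub hN0le] at hcast
  have hlq : (l : ℚ) ≠ 0 := Nat.cast_ne_zero.mpr hl.ne'
  field_simp
  linarith [hcast]
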